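/- Let m, n be integers with n odd and gcd(4m+1, n) = 1, and set Δ = n²·((4m+1)² − 64n) (which is odd, hence nonzero). Then the p-adic valuation of Δ is even for every prime p if and only if there exists an odd integer d with gcd(4m+1, d) = 1 such that n = −d·(4m+1+16d). -/

import Mathlib

private lemma isSquare_of_even_factorization (N : ℕ) (hN : N ≠ 0)
    (h : ∀ p, Even (N.factorization p)) : IsSquare N := by
  refine ⟨N.factorization.prod fun p e => p ^ (e / 2), ?_⟩
  conv_lhs => rw [← Nat.factorization_prod_pow_eq_self hN]
  rw [Finsupp.prod, Finsupp.prod, ← Finset.prod_mul_distrib]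
  refine Finset.prod_congr rfl fun p _ => ?_
  rw [← pow_add]
  congr 1
  obtain ⟨k, hk⟩ := h p
  omega

private lemma split16 (n u v : ℤ) (hn : Odd n) (huv : u * v = 16 * n) (hu : Odd u) :
    ∃ t : ℤ, v = 16 * t ∧ u * t = n ∧ Odd t := by
  have h2 : IsCoprime (2 : ℤ) u := by
    rw [Int.prime_two.coprime_iff_not_dvd]
    rw [Int.odd_iff] at hu
    omega
  have h16 : IsCoprime (16 : ℤ) u := by
    have : IsCoprime ((2 : ℤ) ^ 4) u := h2.pow_left
    norm_num at this
    exact this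
  have hdvd : (16 : ℤ) ∣ u * v := ⟨n, huv⟩
  have hv : (16 : ℤ) ∣ v := h16.dvd_of_dvd_mul_left hdvd
  obtain ⟨t, ht⟩ := hv
  have hut : u * t = n := by
    have h16' : (16 : ℤ) * (u * t) = 16 * n := by rw [← huv, ht]; ring
    exact mul_left_cancel₀ (by norm_num) h16'
  refine ⟨t, ht, hut, ?_⟩
  have : Odd (u * t) := hut ▸ hn
  exact (Int.odd_mul.mp this).2

/-- Let `m, n` be integers with `n` odd and `gcd(4m+1, n) = 1`, and set
`Δ = n²·((4m+1)² − 64n)` (which is odd, hence nonzero).  Then the `p`-adic valuation of `Δ`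
is even for every prime `p` if and only if there exists an odd integer `d` with
`gcd(4m+1, d) = 1` such that `n = −d·(4m+1+16d)`. -/
theorem stmt_2 (m n : ℤ) (hn : Odd n) (hgcd : Int.gcd (4 * m + 1) n = 1) :
    (∀ p : ℕ, p.Prime → Even (padicValInt p (n ^ 2 * ((4 * m + 1) ^ 2 - 64 * n)))) ↔
    ∃ d : ℤ, Odd d ∧ Int.gcd (4 * m + 1) d = 1 ∧ n = -d * (4 * m + 1 + 16 * d) := by
  have hn0 : n ≠ 0 := by rcases hn with ⟨k, hk⟩; omega
  constructor
  · -- hard direction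
    intro h
    obtain ⟨a, ha⟩ : ∃ a : ℤ, a = 4 * m + 1 := ⟨_, rfl⟩
    rw [← ha] at hgcd h ⊢
    obtain ⟨X, hX⟩ : ∃ X : ℤ, X = a ^ 2 - 64 * n := ⟨_, rfl⟩
    rw [← hX] at h
    have haodd : Odd a := ⟨2 * m, by rw [ha]; ring⟩
    have hXodd : Odd X := by
      rcases haodd with ⟨k, hk⟩
      exact ⟨2 * k ^ 2 + 2 * k - 32 * n, by rw [hX, hk]; ring⟩
    have hX0 : X ≠ 0 := by rcases hXodd with ⟨k, hk⟩; omega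
    have hΔ0 : n ^ 2 * X ≠ 0 := mul_ne_zero (pow_ne_zero 2 hn0) hX0
    have hsq : IsSquare (n ^ 2 * X).natAbs := by
      refine isSquare_of_even_factorization _ (Int.natAbs_ne_zero.mpr hΔ0) fun p => ?_
      by_cases hp : p.Prime
      · rw [Nat.factorization_def _ hp]
        have := h p hp
        simpa [padicValInt] using this
      · rw [Nat.factorization_eq_zero_of_not_prime _ hp]; exact Even.zero
    obtain ⟨r, hr⟩ := hsq
    have habs : |n ^ 2 * X| = (r : ℤ) ^ 2 := by
      rw [Int.abs_eq_natAbs, hr]; push_cast; ring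
    have habs2 : n ^ 2 * |X| = (r : ℤ) ^ 2 := by
      rw [← habs, abs_mul, abs_pow, sq_abs]
    have hndvd : n ∣ (r : ℤ) := by
      rw [← Int.pow_dvd_pow_iff (two_ne_zero)]
      exact ⟨|X|, habs2.symm⟩
    obtain ⟨s, hs⟩ := hndvd
    have hXabs : |X| = s ^ 2 := by
      have h2 : n ^ 2 * |X| = n ^ 2 * s ^ 2 := by rw [habs2, hs]; ring
      exact mul_left_cancel₀ (pow_ne_zero 2 hn0) h2
    have hsodd : Odd s := by
      have hodd : Odd (s ^ 2) := by
        rw [← hXabs]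
        rcases abs_choice X with hc | hc <;> rw [hc]
        · exact hXodd
        · rcases hXodd with ⟨k, hk⟩; exact ⟨-k - 1, by omega⟩
      rw [sq, Int.odd_mul] at hodd
      exact hodd.1
    have hXeq : X = s ^ 2 := by
      rcases abs_choice X with hc | hc
      · rw [← hc, hXabs]
      · exfalso
        have hXneg : X = -(s ^ 2) := by rw [← hXabs, hc]; ring
        rcases haodd with ⟨k, hk⟩
        rcases hsodd with ⟨l, hl⟩
        have heq : (2 * k + 1) ^ 2 + (2 * l + 1) ^ 2 = 64 * n := by
          have h64 : a ^ 2 + s ^ 2 = 64 * n := by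
            rw [hX] at hXneg; linarith
          rw [← hk, ← hl]; linarith
        obtain ⟨e, he⟩ := Int.even_mul_succ_self k
        obtain ⟨f, hf⟩ := Int.even_mul_succ_self l
        have hk2 : (2 * k + 1) ^ 2 = 8 * e + 1 := by nlinarith [he]
        have hl2 : (2 * l + 1) ^ 2 = 8 * f + 1 := by nlinarith [hf]
        omega
    have hfac : (a - s) * (a + s) = 64 * n := by
      have h64 : a ^ 2 - s ^ 2 = 64 * n := by rw [hX] at hXeq; linarith
      linear_combination h64
    obtain ⟨u, hu⟩ : Even (a - s) := by
      rcases haodd with ⟨k, hk⟩; rcases hsodd with ⟨l, hl⟩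
      exact ⟨k - l, by omega⟩
    obtain ⟨v, hv⟩ : Even (a + s) := by
      rcases haodd with ⟨k, hk⟩; rcases hsodd with ⟨l, hl⟩
      exact ⟨k + l + 1, by omega⟩
    have huv : u * v = 16 * n := by
      have h4 : (4 : ℤ) * (u * v) = 4 * (16 * n) := by
        have : (4 : ℤ) * (u * v) = (a - s) * (a + s) := by rw [hu, hv]; ring
        rw [this, hfac]; ring
      exact mul_left_cancel₀ (by norm_num) h4
    have hauv : a = u + v := by omega
    have hnotboth : Odd u ∨ Odd v := by
      rcases Int.even_or_odd u with he | ho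
      · right
        rcases haodd with ⟨k, hk⟩; rcases he with ⟨j, hj⟩
        exact ⟨k - j, by omega⟩
      · left; exact ho
    have finish : ∀ t : ℤ, Odd t → t * (a - 16 * t) = n →
        ∃ d : ℤ, Odd d ∧ Int.gcd a d = 1 ∧ n = -d * (a + 16 * d) := by
      intro t ht hteq
      refine ⟨-t, ht.neg, ?_, by linear_combination -hteq⟩
      have hdvdn : t ∣ n := ⟨a - 16 * t, hteq.symm⟩
      have hg : (↑(Int.gcd a (-t)) : ℤ) ∣ 1 := by
        have h1 : (↑(Int.gcd a (-t)) : ℤ) ∣ a := Int.gcd_dvd_left _ _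
        have h2 : (↑(Int.gcd a (-t)) : ℤ) ∣ n := by
          have hd : (↑(Int.gcd a (-t)) : ℤ) ∣ -t := Int.gcd_dvd_right _ _
          exact ((dvd_neg.mp hd)).trans hdvdn
        have hdg := Int.dvd_coe_gcd h1 h2
        rwa [hgcd, Nat.cast_one] at hdg
      have hg' : Int.gcd a (-t) ∣ 1 := by exact_mod_cast hg
      exact Nat.dvd_one.mp hg'
    rcases hnotboth with hou | hov
    · obtain ⟨t, htv, htn, htodd⟩ := split16 n u v hn huv hou
      refine finish t htodd ?_
      have huval : u = a - 16 * t := by omega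
      rw [huval] at htn
      linear_combination htn
    · obtain ⟨t, htu, htn, htodd⟩ := split16 n v u hn (by linarith [huv, mul_comm u v]) hov
      refine finish t htodd ?_
      have hvval : v = a - 16 * t := by omega
      rw [hvval] at htn
      linear_combination htn
  · -- easy direction
    rintro ⟨d, hd, hdg, hnd⟩ p hp
    haveI : Fact p.Prime := ⟨hp⟩
    have hodd : Odd (4 * m + 1 + 32 * d) := ⟨2 * m + 16 * d, by ring⟩
    have hz : n * (4 * m + 1 + 32 * d) ≠ 0 := by
      refine mul_ne_zero hn0 ?_
      rcases hodd with ⟨k, hk⟩; omega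
    have key : n ^ 2 * ((4 * m + 1) ^ 2 - 64 * n) = (n * (4 * m + 1 + 32 * d)) ^ 2 := by
      rw [hnd]; ring
    rw [key]
    simp only [padicValInt, Int.natAbs_pow]
    rw [padicValNat.pow _ 2]
    exact even_two_mul _
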